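/- arXiv:2201.02579 — 2 statements merged into one kernel-verified Lean document; each statement's English description precedes it below -/
import Mathlib

section
/- Let n ≥ 5 and let C be the (n−1)×(n−1) circulant matrix circ(1,0,…,0,−1). Then X = (CCᵀ + I_{n−1})⁻¹(J_{n−1} − n·I_{n−1}) equals the circulant matrix circ(b_0, b_1, …, b_{n−2}) where, for 0 ≤ j ≤ n−2, b_j = 1 + (n·2^{n−1−j}/√5) · [ (3+√5)^j / (2^{n−1} − (3+√5)^{n−1}) − (3−√5)^j / (2^{n−1} − (3−√5)^{n−1}) ]. -/
open Matrix

noncomputable section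

/-- The circulant matrix of order `m` with defining vector `v`:
its `(i,j)` entry is `v ((j - i) mod m)`. -/
def circ {m : ℕ} (v : Fin m → ℝ) : Matrix (Fin m) (Fin m) ℝ :=
  Matrix.of fun i j => v (j - i)

/-- The `m × m` all-ones matrix. -/
def Jmat (m : ℕ) : Matrix (Fin m) (Fin m) ℝ := Matrix.of fun _ _ => 1

/- ### Auxiliary circulant lemmas -/

lemma wheel_circ_mul {m : ℕ} [NeZero m] (u w : Fin m → ℝ) :
    circ u * circ w = circ (fun d => ∑ k, u k * w (d - k)) := by
  ext i j
  simp only [circ, Matrix.mul_apply, Matrix.of_apply]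
  refine Fintype.sum_equiv (Equiv.subRight i) _ _ fun k => ?_
  simp only [Equiv.subRight_apply]
  rw [show j - i - (k - i) = j - k from by abel]

lemma wheel_transpose_circ {m : ℕ} [NeZero m] (v : Fin m → ℝ) :
    (circ v)ᵀ = circ (fun k => v (-k)) := by
  ext i j
  simp only [circ, Matrix.transpose_apply, Matrix.of_apply, neg_sub]

lemma wheel_circ_add {m : ℕ} (u w : Fin m → ℝ) : circ u + circ w = circ (u + w) := by
  ext i j; simp [circ]

lemma wheel_one_eq_circ {m : ℕ} [NeZero m] :
    (1 : Matrix (Fin m) (Fin m) ℝ) = circ (fun d => if d = 0 then 1 else 0) := by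
  ext i j
  simp only [circ, Matrix.one_apply, Matrix.of_apply, sub_eq_zero]
  by_cases h : i = j <;> simp [h, eq_comm]

lemma wheel_Jmat_sub_smul {m : ℕ} [NeZero m] (c : ℝ) :
    Jmat m - c • (1 : Matrix (Fin m) (Fin m) ℝ)
      = circ (fun d => 1 - c * (if d = 0 then 1 else 0)) := by
  ext i j
  simp only [Jmat, circ, Matrix.sub_apply, Matrix.smul_apply, Matrix.one_apply, Matrix.of_apply,
    sub_eq_zero, smul_eq_mul]
  by_cases h : i = j <;> simp [h, eq_comm]

/- ### Fin arithmetic helpers -/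

lemma wheel_val_one {m : ℕ} [NeZero m] (hm : 4 ≤ m) : ((1 : Fin m)).val = 1 := by
  rw [Fin.val_one']; exact Nat.mod_eq_of_lt (by omega)

lemma wheel_val_neg_one {m : ℕ} [NeZero m] (hm : 4 ≤ m) : ((-1 : Fin m)).val = m - 1 := by
  rw [Fin.neg_def]
  simp only [Fin.val_one', Nat.mod_eq_of_lt (show (1:ℕ) < m by omega)]
  exact Nat.mod_eq_of_lt (by omega)

lemma wheel_val_sub_one {m : ℕ} [NeZero m] (hm : 4 ≤ m) (d : Fin m) :
    (d - 1).val = (d.val + (m - 1)) % m := by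
  rw [Fin.sub_def]
  simp only [Fin.val_one', Nat.mod_eq_of_lt (show (1:ℕ) < m by omega)]
  congr 1
  omega

lemma wheel_val_add_one {m : ℕ} [NeZero m] (hm : 4 ≤ m) (d : Fin m) :
    (d + 1).val = (d.val + 1) % m := by
  rw [Fin.add_def, Fin.val_one', Nat.mod_eq_of_lt (show (1:ℕ) < m by omega)]

/- ### Scalar identities -/

lemma wheel_scalar_mid (s N P Q Da Db R : ℝ) (hs : s^2 = 5) :
    3*(1 + (N*(R*4)/s)*((3+s)*P/Da - (3-s)*Q/Db))
    - (1 + (N*(R*8)/s)*(P/Da - Q/Db))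
    - (1 + (N*(R*2)/s)*((3+s)^2*P/Da - (3-s)^2*Q/Db)) = 1 := by
  linear_combination (-(N * (R*2) / s) * (P/Da - Q/Db)) * hs

lemma wheel_scalar_zero (s N P Q R : ℝ) (hs : s^2 = 5) (hs0 : s ≠ 0)
    (hDa : 2*R - (3+s)*P ≠ 0) (hDb : 2*R - (3-s)*Q ≠ 0) :
    3*(1 + (N*(2*R)/s)*(1/(2*R - (3+s)*P) - 1/(2*R - (3-s)*Q)))
    - (1 + (N*2/s)*(P/(2*R - (3+s)*P) - Q/(2*R - (3-s)*Q)))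
    - (1 + (N*R/s)*((3+s)/(2*R - (3+s)*P) - (3-s)/(2*R - (3-s)*Q))) = 1 - N := by
  field_simp
  linear_combination (-(N*(s*P*Q + R*P - R*Q))) * hs

lemma wheel_scalar_last (s N P Q R : ℝ) (hs : s^2 = 5) (hs0 : s ≠ 0)
    (hDa : 4*R - (3+s)^2*P ≠ 0) (hDb : 4*R - (3-s)^2*Q ≠ 0) :
    3*(1 + (N*2/s)*((3+s)*P/(4*R - (3+s)^2*P) - (3-s)*Q/(4*R - (3-s)^2*Q)))
    - (1 + (N*4/s)*(P/(4*R - (3+s)^2*P) - Q/(4*R - (3-s)^2*Q)))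
    - (1 + (N*(4*R)/s)*(1/(4*R - (3+s)^2*P) - 1/(4*R - (3-s)^2*Q))) = 1 := by
  field_simp
  linear_combination (-(N*(12*s*P*Q + 4*R*P - 4*R*Q))) * hs

/- ### The defining vector of the answer and its three-term recurrence -/

def bbv (n : ℕ) : Fin (n-1) → ℝ :=
  fun j : Fin (n-1) => 1 + ((n:ℝ) * (2:ℝ) ^ (n-1-j.val) / Real.sqrt 5) *
    ((3 + Real.sqrt 5) ^ j.val / ((2:ℝ) ^ (n-1) - (3 + Real.sqrt 5) ^ (n-1)) -
     (3 - Real.sqrt 5) ^ j.val / ((2:ℝ) ^ (n-1) - (3 - Real.sqrt 5) ^ (n-1)))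

lemma wheel_bspec (n : ℕ) [NeZero (n-1)] (hn : 5 ≤ n) (d : Fin (n-1)) :
    3 * bbv n d - bbv n (d - 1) - bbv n (d + 1)
      = 1 - (n:ℝ) * (if d = 0 then 1 else 0) := by
  have hm : 4 ≤ n - 1 := by omega
  have hs : Real.sqrt 5 ^ 2 = 5 := Real.sq_sqrt (by norm_num)
  have hsnn : (0:ℝ) ≤ Real.sqrt 5 := Real.sqrt_nonneg 5
  have hs2 : (2:ℝ) < Real.sqrt 5 := by nlinarith
  have hs3 : Real.sqrt 5 < 3 := by nlinarith
  have hs0 : Real.sqrt 5 ≠ 0 := by linarith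
  set s := Real.sqrt 5 with hsdef
  have hDa : (2:ℝ)^(n-1) - (3+s)^(n-1) ≠ 0 := by
    have : (2:ℝ)^(n-1) < (3+s)^(n-1) :=
      pow_lt_pow_left₀ (by linarith) (by norm_num) (by omega)
    linarith
  have hDb : (2:ℝ)^(n-1) - (3-s)^(n-1) ≠ 0 := by
    have : (3-s)^(n-1) < (2:ℝ)^(n-1) :=
      pow_lt_pow_left₀ (by linarith) (by linarith) (by omega)
    linarith
  have hd := d.isLt
  rcases Nat.lt_or_ge d.val 1 with h0 | h1
  · -- d.val = 0
    have hval : d.val = 0 := by omega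
    have hdeq : d = 0 := Fin.ext (by simpa using hval)
    have hsub : (d - 1).val = n - 2 := by
      rw [wheel_val_sub_one hm, hval, zero_add, Nat.mod_eq_of_lt (by omega)]; omega
    have hadd : (d + 1).val = 1 := by
      rw [wheel_val_add_one hm, hval]; exact Nat.mod_eq_of_lt (by omega)
    have e2 : (2:ℝ)^(n-1) = 2 * 2^(n-2) := by
      conv_lhs => rw [show n-1 = (n-2)+1 by omega]
      rw [pow_succ]; ring
    have ea : (3+s)^(n-1) = (3+s) * (3+s)^(n-2) := by
      conv_lhs => rw [show n-1 = (n-2)+1 by omega]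
      rw [pow_succ]; ring
    have eb : (3-s)^(n-1) = (3-s) * (3-s)^(n-2) := by
      conv_lhs => rw [show n-1 = (n-2)+1 by omega]
      rw [pow_succ]; ring
    rw [e2, ea] at hDa
    rw [e2, eb] at hDb
    simp only [bbv, hval, hsub, hadd, ← hsdef, if_pos hdeq, Nat.sub_zero, pow_zero, pow_one,
      show n-1-(n-2) = 1 by omega, show n-1-1 = n-2 by omega]
    simp only [e2, ea, eb]
    linear_combination wheel_scalar_zero s (n:ℝ) ((3+s)^(n-2)) ((3-s)^(n-2)) ((2:ℝ)^(n-2))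
      hs hs0 hDa hDb
  · rcases Nat.lt_or_ge d.val (n-2) with h2 | h3
    · -- interior : 1 ≤ d.val ≤ n-3
      have hne : d ≠ 0 := by
        intro h; rw [h] at h1; simp at h1
      have hsub : (d - 1).val = d.val - 1 := by
        rw [wheel_val_sub_one hm, show d.val + (n-1-1) = (d.val - 1) + (n-1) by omega,
          Nat.add_mod_right, Nat.mod_eq_of_lt (by omega)]
      have hadd : (d + 1).val = d.val + 1 := by
        rw [wheel_val_add_one hm]; exact Nat.mod_eq_of_lt (by omega)
      have e1 : (2:ℝ)^(n-1-d.val) = 2^(n-3-d.val) * 4 := by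
        rw [show n-1-d.val = (n-3-d.val)+2 by omega, pow_add]; norm_num
      have e2 : (2:ℝ)^(n-1-(d.val-1)) = 2^(n-3-d.val) * 8 := by
        rw [show n-1-(d.val-1) = (n-3-d.val)+3 by omega, pow_add]; norm_num
      have e3 : (2:ℝ)^(n-1-(d.val+1)) = 2^(n-3-d.val) * 2 := by
        rw [show n-1-(d.val+1) = (n-3-d.val)+1 by omega, pow_add]; norm_num
      have fa1 : (3+s)^(d.val) = (3+s) * (3+s)^(d.val-1) := by
        conv_lhs => rw [show d.val = (d.val-1)+1 by omega]
        rw [pow_succ]; ring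
      have fa2 : (3+s)^(d.val+1) = (3+s)^2 * (3+s)^(d.val-1) := by
        conv_lhs => rw [show d.val+1 = (d.val-1)+2 by omega]
        rw [pow_add]; ring
      have fb1 : (3-s)^(d.val) = (3-s) * (3-s)^(d.val-1) := by
        conv_lhs => rw [show d.val = (d.val-1)+1 by omega]
        rw [pow_succ]; ring
      have fb2 : (3-s)^(d.val+1) = (3-s)^2 * (3-s)^(d.val-1) := by
        conv_lhs => rw [show d.val+1 = (d.val-1)+2 by omega]
        rw [pow_add]; ring
      simp only [bbv, hsub, hadd, ← hsdef, if_neg hne]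
      simp only [e1, e2, e3, fa1, fa2, fb1, fb2]
      linear_combination wheel_scalar_mid s (n:ℝ) ((3+s)^(d.val-1)) ((3-s)^(d.val-1))
        ((2:ℝ)^(n-1) - (3+s)^(n-1)) ((2:ℝ)^(n-1) - (3-s)^(n-1)) ((2:ℝ)^(n-3-d.val)) hs
    · -- d.val = n-2 (last)
      have hval : d.val = n - 2 := by omega
      have hne : d ≠ 0 := by
        intro h; rw [h] at hval; simp at hval; omega
      have hsub : (d - 1).val = n - 3 := by
        rw [wheel_val_sub_one hm, hval, show (n-2) + (n-1-1) = (n-3) + (n-1) by omega,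
          Nat.add_mod_right, Nat.mod_eq_of_lt (by omega)]
      have hadd : (d + 1).val = 0 := by
        rw [wheel_val_add_one hm, hval, show n-2+1 = n-1 by omega, Nat.mod_self]
      have e2 : (2:ℝ)^(n-1) = 4 * 2^(n-3) := by
        conv_lhs => rw [show n-1 = (n-3)+2 by omega]
        rw [pow_add]; ring
      have ea : (3+s)^(n-1) = (3+s)^2 * (3+s)^(n-3) := by
        conv_lhs => rw [show n-1 = (n-3)+2 by omega]
        rw [pow_add]; ring
      have eb : (3-s)^(n-1) = (3-s)^2 * (3-s)^(n-3) := by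
        conv_lhs => rw [show n-1 = (n-3)+2 by omega]
        rw [pow_add]; ring
      have ea2 : (3+s)^(n-2) = (3+s) * (3+s)^(n-3) := by
        conv_lhs => rw [show n-2 = (n-3)+1 by omega]
        rw [pow_succ]; ring
      have eb2 : (3-s)^(n-2) = (3-s) * (3-s)^(n-3) := by
        conv_lhs => rw [show n-2 = (n-3)+1 by omega]
        rw [pow_succ]; ring
      rw [e2, ea] at hDa
      rw [e2, eb] at hDb
      simp only [bbv, hval, hsub, hadd, ← hsdef, if_neg hne, pow_zero, Nat.sub_zero,
        show n-1-(n-2) = 1 by omega, show n-1-(n-3) = 2 by omega, pow_one]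
      simp only [e2, ea, eb, ea2, eb2]
      linear_combination wheel_scalar_last s (n:ℝ) ((3+s)^(n-3)) ((3-s)^(n-3)) ((2:ℝ)^(n-3))
        hs hs0 hDa hDb

/- ### The matrix `C Cᵀ + 1` as a circulant -/

lemma wheel_A_circ (m : ℕ) [NeZero m] (hm : 4 ≤ m)
    (h01 : (0 : Fin m) ≠ 1) (h0n : (0 : Fin m) ≠ -1) (h1n : (1 : Fin m) ≠ -1)
    (u : Fin m → ℝ) (hu : u = fun k => (if k = 0 then (1:ℝ) else 0) - (if k = -1 then 1 else 0)) :
    circ u * (circ u)ᵀ + 1 = circ (fun k =>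
      (if k = 0 then (3:ℝ) else 0) - (if k = 1 then 1 else 0) - (if k = -1 then 1 else 0)) := by
  rw [wheel_transpose_circ, hu, wheel_circ_mul, wheel_one_eq_circ, wheel_circ_add]
  refine congrArg circ (funext fun d => ?_)
  have c1 : ((0:Fin m) - d = 0) ↔ d = 0 := by
    rw [zero_sub, neg_eq_zero]
  have c2 : ((0:Fin m) - d = -1) ↔ d = 1 := by
    rw [zero_sub, neg_inj]
  have c3 : ((-1:Fin m) - d = 0) ↔ d = -1 := by
    rw [sub_eq_zero, eq_comm]
  have c4 : ((-1:Fin m) - d = -1) ↔ d = 0 := by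
    rw [sub_eq_self]
  simp only [Pi.add_apply, neg_sub, sub_mul, mul_sub, ite_mul, mul_ite, one_mul, mul_one,
    zero_mul, mul_zero, Finset.sum_sub_distrib, Finset.sum_ite_eq', Finset.mem_univ, if_true]
  have e0 : ∀ x : Fin m, (x - d = 0) ↔ x = d := fun x => sub_eq_zero
  have e1 : ∀ x : Fin m, (x - d = -1) ↔ x = d - 1 := fun x => by
    rw [sub_eq_iff_eq_add', ← sub_eq_add_neg]
  simp only [e0, e1, Finset.sum_ite_eq', Finset.mem_univ, if_true]
  have g1 : (d - 1 = 0) ↔ d = 1 := sub_eq_zero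
  have g2 : (d - 1 = -1) ↔ d = 0 := by
    rw [sub_eq_iff_eq_add, neg_add_cancel]
  simp only [g1, g2]
  have h10 : (1 : Fin m) ≠ 0 := Ne.symm h01
  have hn0 : (-1 : Fin m) ≠ 0 := Ne.symm h0n
  have hn1 : (-1 : Fin m) ≠ 1 := Ne.symm h1n
  by_cases hd0 : d = 0
  · simp only [hd0, if_pos rfl, if_neg h01, if_neg h0n, if_neg h10, if_neg hn0, if_neg h1n,
      if_neg hn1]
    norm_num
  · by_cases hd1 : d = 1
    · simp only [hd1, if_pos rfl, if_neg h01, if_neg h0n, if_neg h10, if_neg hn0, if_neg h1n,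
        if_neg hn1]
      norm_num
    · by_cases hdn : d = -1
      · simp only [hdn, if_pos rfl, if_neg h01, if_neg h0n, if_neg h10, if_neg hn0, if_neg h1n,
          if_neg hn1]
        norm_num
      · simp only [if_neg hd0, if_neg hd1, if_neg hdn]
        norm_num

lemma wheel_conv_three {m : ℕ} [NeZero m] (b : Fin m → ℝ) :
    circ (fun k => (if k = 0 then (3:ℝ) else 0) - (if k = 1 then 1 else 0)
        - (if k = -1 then 1 else 0)) * circ b
      = circ (fun d => 3 * b d - b (d - 1) - b (d + 1)) := by
  rw [wheel_circ_mul]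
  refine congrArg circ (funext fun d => ?_)
  simp only [sub_mul, ite_mul, zero_mul, one_mul, Finset.sum_sub_distrib,
    Finset.sum_ite_eq', Finset.mem_univ, if_true]
  rw [sub_zero, sub_neg_eq_add]

/- ### Main theorem -/

theorem wheel_oriented_X_entries (n : ℕ) (hn : 5 ≤ n)
    (C X : Matrix (Fin (n-1)) (Fin (n-1)) ℝ)
    (hC : C = circ (fun k => if k.val = 0 then (1:ℝ) else if k.val = n - 2 then -1 else 0))
    (hX : X = (C * Cᵀ + 1)⁻¹ * (Jmat (n-1) - (n:ℝ) • (1 : Matrix (Fin (n-1)) (Fin (n-1)) ℝ))) :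
    X = circ (fun j : Fin (n-1) => 1 + ((n:ℝ) * (2:ℝ) ^ (n-1-j.val) / Real.sqrt 5) * ((3 + Real.sqrt 5) ^ j.val / ((2:ℝ) ^ (n-1) - (3 + Real.sqrt 5) ^ (n-1)) - (3 - Real.sqrt 5) ^ j.val / ((2:ℝ) ^ (n-1) - (3 - Real.sqrt 5) ^ (n-1)))) := by
  haveI : NeZero (n-1) := ⟨by omega⟩
  have hm : 4 ≤ n - 1 := by omega
  subst hC hX
  show _ = circ (bbv n)
  set v : Fin (n-1) → ℝ := fun k => if k.val = 0 then (1:ℝ) else if k.val = n - 2 then -1 else 0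
    with hvdef
  have h0v : ((0 : Fin (n-1))).val = 0 := rfl
  have h1v := wheel_val_one (m := n-1) hm
  have hnv := wheel_val_neg_one (m := n-1) hm
  have h01 : (0 : Fin (n-1)) ≠ 1 := by
    intro h; rw [Fin.ext_iff, h0v, h1v] at h; omega
  have h0n : (0 : Fin (n-1)) ≠ -1 := by
    intro h; rw [Fin.ext_iff, h0v, hnv] at h; omega
  have h1n : (1 : Fin (n-1)) ≠ -1 := by
    intro h; rw [Fin.ext_iff, h1v, hnv] at h; omega
  have hv : v = fun k => (if k = 0 then (1:ℝ) else 0) - (if k = -1 then 1 else 0) := by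
    funext k
    show (if k.val = 0 then (1:ℝ) else if k.val = n - 2 then -1 else 0)
      = (if k = 0 then (1:ℝ) else 0) - (if k = -1 then 1 else 0)
    by_cases hk0 : k = 0
    · subst hk0
      rw [if_pos h0v, if_pos rfl, if_neg h0n]
      norm_num
    · by_cases hk1 : k = -1
      · subst hk1
        rw [if_neg (by rw [hnv]; omega), if_pos (by rw [hnv]; omega),
          if_neg (fun h => h0n h.symm), if_pos rfl]
        norm_num
      · have c0 : ¬ (k.val = 0) := fun h => hk0 (Fin.ext (by rw [h, h0v]))
        have c1 : ¬ (k.val = n - 2) := fun h => hk1 (Fin.ext (by rw [h, hnv]; omega))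
        rw [if_neg c0, if_neg c1, if_neg hk0, if_neg hk1]
        norm_num
  have hA := wheel_A_circ (n-1) hm h01 h0n h1n v hv
  have key : (circ v * (circ v)ᵀ + 1) * circ (bbv n) =
      Jmat (n-1) - (n:ℝ) • (1 : Matrix (Fin (n-1)) (Fin (n-1)) ℝ) := by
    rw [hA, wheel_conv_three, wheel_Jmat_sub_smul]
    exact congrArg circ (funext fun d => wheel_bspec n hn d)
  have hdet : IsUnit ((circ v * (circ v)ᵀ + 1)).det := by
    have h1 : (circ v * (circ v)ᴴ).PosSemidef :=
      Matrix.posSemidef_self_mul_conjTranspose (circ v)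
    rw [Matrix.conjTranspose_eq_transpose_of_trivial] at h1
    have h2 : (circ v * (circ v)ᵀ + 1).PosDef :=
      Matrix.PosDef.posSemidef_add h1 Matrix.PosDef.one
    exact h2.det_pos.ne'.isUnit
  rw [← key, ← Matrix.mul_assoc, Matrix.nonsing_inv_mul _ hdet, Matrix.one_mul]
end
end

section
/- Let n ≥ 4, let B be the (n−1)×(n−1) circulant matrix circ(3,−1,0,…,0,−1), and let L be the n×n block matrix L = [[n−1, −𝟏ᵀ],[−𝟏, B]] (the Laplacian matrix of the wheel graph W_n). Let C = circ(1,0,…,0,−1) of order n−1, X = (CCᵀ + I_{n−1})⁻¹(J_{n−1} − n·I_{n−1}), and H = (1/n²) · [[n−1, −𝟏ᵀ],[−𝟏, −J_{n−1} − nX]]. Then H is the Moore–Penrose inverse of L, i.e. L H L = L, H L H = H, (L H)ᵀ = L H, and (H L)ᵀ = H L. -/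
open Matrix

noncomputable section

section Aux

/-- The defining vector of the circulant `B`. -/
private def vv (m : ℕ) : Fin (m+3) → ℝ :=
  fun k => if k = 0 then 3 else if k = 1 ∨ k = -1 then -1 else 0

/-- The defining vector of the circulant `C`. -/
private def ww (m : ℕ) : Fin (m+3) → ℝ :=
  fun k => if k = 0 then 1 else if k = -1 then -1 else 0

private lemma h01 (m : ℕ) : (0 : Fin (m+3)) ≠ 1 := by simp [Fin.ext_iff]
private lemma h0n (m : ℕ) : (0 : Fin (m+3)) ≠ -1 := by simp [Fin.ext_iff]
private lemma h1n (m : ℕ) : (1 : Fin (m+3)) ≠ -1 := by simp [Fin.ext_iff]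

private lemma circ_apply {m : ℕ} (v : Fin m → ℝ) (i j : Fin m) :
    circ v i j = v (j - i) := rfl

private lemma vv_expand (m : ℕ) (k : Fin (m+3)) :
    vv m k = (if k = 0 then 3 else 0) + (if k = 1 then -1 else 0) + (if k = -1 then -1 else 0) := by
  unfold vv
  by_cases h0 : k = 0
  · subst h0; simp [h01 m, h0n m]
  · by_cases h1 : k = 1
    · subst h1; simp [(h01 m).symm, h1n m]
    · by_cases h2 : k = -1
      · subst h2; simp [(h0n m).symm, (h1n m).symm]
      · simp [h0, h1, h2]

private lemma sum_vv (m : ℕ) : ∑ k, vv m k = 1 := by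
  simp only [vv_expand]
  rw [Finset.sum_add_distrib, Finset.sum_add_distrib]
  simp [Finset.sum_ite_eq']
  norm_num

private lemma vv_neg (m : ℕ) (k : Fin (m+3)) : vv m (-k) = vv m k := by
  unfold vv
  by_cases h0 : k = 0
  · simp [h0]
  · by_cases h1 : k = 1
    · subst h1; simp [h01 m, (h01 m).symm, h1n m, (h1n m).symm]
    · by_cases h2 : k = -1
      · subst h2; simp [h0n m, (h0n m).symm, h1n m, (h1n m).symm]
      · have e0 : -k ≠ 0 := by simpa [neg_eq_iff_eq_neg] using h0
        have e1 : -k ≠ 1 := fun h => h2 (neg_eq_iff_eq_neg.mp h)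
        have e2 : -k ≠ -1 := fun h => h1 (neg_inj.mp h)
        simp [h0, h1, h2, e0, e1, e2]

private lemma ww_key (m : ℕ) (d : Fin (m+3)) :
    ww m d - ww m (d - 1) = vv m d - (if d = 0 then 1 else 0) := by
  unfold ww vv
  by_cases h0 : d = 0
  · subst h0
    have h : (0 : Fin (m+3)) - 1 = -1 := by abel
    rw [h]
    simp [h0n m, (h0n m).symm]
    norm_num
  · by_cases h1 : d = 1
    · subst h1
      have h : (1 : Fin (m+3)) - 1 = 0 := by abel
      rw [h]
      simp [(h01 m).symm, h1n m]
    · by_cases h2 : d = -1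
      · subst h2
        have e0 : (-1 : Fin (m+3)) - 1 ≠ 0 :=
          fun h => (h1n m).symm (sub_eq_zero.mp h)
        have e1 : (-1 : Fin (m+3)) - 1 ≠ -1 :=
          fun h => (h0n m).symm (by simpa using sub_eq_iff_eq_add.mp h)
        simp [h0n m, (h0n m).symm, e0, e1]
      · have e0 : d - 1 ≠ 0 := fun h => h1 (sub_eq_zero.mp h)
        have e1 : d - 1 ≠ -1 :=
          fun h => h0 (by simpa using sub_eq_iff_eq_add.mp h)
        simp [h0, h1, h2, e0, e1]

private lemma CC_entry (m : ℕ) (i j : Fin (m+3)) :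
    ∑ k, ww m (k - i) * ww m (k - j) = vv m (j - i) - (if i = j then 1 else 0) := by
  have hexp : ∀ k : Fin (m+3),
      ww m (k - i) = (if k = i then 1 else 0) + (if k = i - 1 then (-1:ℝ) else 0) := by
    intro k
    by_cases h0 : k = i
    · subst h0
      have h1 : k ≠ k - 1 := by
        intro h
        exact (h01 m) (sub_eq_self.mp h.symm).symm
      simp [ww, sub_self, h1]
    · by_cases h1 : k = i - 1
      · have h : k - i = -1 := by subst h1; abel
        rw [h]
        simp [ww, h0, h1, (h0n m).symm]
      · have e0 : k - i ≠ 0 := fun h => h0 (sub_eq_zero.mp h)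
        have e1 : k - i ≠ -1 := fun h => h1 (by rw [sub_eq_iff_eq_add.mp h]; abel)
        simp [ww, e0, e1, h0, h1]
  calc ∑ k, ww m (k - i) * ww m (k - j)
      = ∑ k, ((if k = i then ww m (k - j) else 0)
          + (if k = i - 1 then -(ww m (k - j)) else 0)) := by
        refine Finset.sum_congr rfl fun k _ => ?_
        rw [hexp k]; split_ifs <;> ring
    _ = ww m (i - j) + -(ww m (i - 1 - j)) := by
        rw [Finset.sum_add_distrib]
        simp [Finset.sum_ite_eq']
    _ = vv m (j - i) - (if i = j then 1 else 0) := by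
        have h1 : i - 1 - j = (i - j) - 1 := by abel
        rw [h1, ← sub_eq_add_neg, ww_key m (i - j)]
        have h2 : vv m (i - j) = vv m (j - i) := by
          rw [show i - j = -(j - i) from by abel, vv_neg]
        rw [h2]
        congr 1
        by_cases h : i = j
        · simp [h]
        · have h' : i - j ≠ 0 := fun hh => h (sub_eq_zero.mp hh)
          simp [h, h']

private lemma main_aux (m : ℕ) (B C X : Matrix (Fin (m+3)) (Fin (m+3)) ℝ)
    (hB : B = circ (fun k => if k.val = 0 then (3:ℝ) else
      if k.val = 1 ∨ k.val = m + 2 then -1 else 0))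
    (hC : C = circ (fun k => if k.val = 0 then (1:ℝ) else if k.val = m + 2 then -1 else 0))
    (hX : X = (C * Cᵀ + 1)⁻¹ *
      (Jmat (m+3) - ((m+4 : ℕ) : ℝ) • (1 : Matrix (Fin (m+3)) (Fin (m+3)) ℝ)))
    (L : Matrix (Fin 1 ⊕ Fin (m+3)) (Fin 1 ⊕ Fin (m+3)) ℝ)
    (hL : L = Matrix.fromBlocks (Matrix.of fun _ _ => ((m+4 : ℕ) : ℝ) - 1)
      (Matrix.of fun _ _ => -1) (Matrix.of fun _ _ => -1) B)
    (H : Matrix (Fin 1 ⊕ Fin (m+3)) (Fin 1 ⊕ Fin (m+3)) ℝ)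
    (hH : H = (1 / ((m+4 : ℕ) : ℝ)^2) •
      Matrix.fromBlocks (Matrix.of fun _ _ => ((m+4 : ℕ) : ℝ) - 1)
        (Matrix.of fun _ _ => -1)
        (Matrix.of fun _ _ => -1) (-(Jmat (m+3)) - ((m+4 : ℕ) : ℝ) • X)) :
    L * H * L = L ∧ H * L * H = H ∧ (L * H)ᵀ = L * H ∧ (H * L)ᵀ = H * L := by
  set N : ℝ := ((m+4 : ℕ) : ℝ) with hNdef
  have hN : N = (m : ℝ) + 4 := by rw [hNdef]; push_cast; ring
  clear_value N
  have hN0 : N ≠ 0 := by rw [hN]; positivity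
  -- rewrite B and C as circulants of vv, ww
  have hcond0 : ∀ k : Fin (m+3), k.val = 0 ↔ k = 0 := fun k => by rw [Fin.ext_iff, Fin.val_zero]
  have hcond1 : ∀ k : Fin (m+3), k.val = 1 ↔ k = 1 := fun k => by simp [Fin.ext_iff]
  have hcond2 : ∀ k : Fin (m+3), k.val = m + 2 ↔ k = -1 := fun k => by simp [Fin.ext_iff]
  have hBv : B = circ (vv m) := by
    rw [hB]; unfold circ; congr 1; funext i j
    simp only [hcond0, hcond1, hcond2, vv]
  have hCw : C = circ (ww m) := by
    rw [hC]; unfold circ; congr 1; funext i j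
    simp only [hcond0, hcond2, ww]
  -- row and column sums of B
  have hBrow : ∀ i : Fin (m+3), ∑ k, B i k = 1 := by
    intro i
    rw [hBv]
    simp only [circ_apply]
    have := Equiv.sum_comp (Equiv.subRight i) (vv m)
    simpa using this.trans (sum_vv m)
  have hBcol : ∀ j : Fin (m+3), ∑ k, B k j = 1 := by
    intro j
    rw [hBv]
    simp only [circ_apply]
    have := Equiv.sum_comp (Equiv.subLeft j) (vv m)
    simpa using this.trans (sum_vv m)
  -- symmetry of B
  have hBsym : Bᵀ = B := by
    rw [hBv]
    ext i j
    simp only [transpose_apply, circ_apply]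
    rw [show i - j = -(j - i) from by abel, vv_neg]
  -- C Cᵀ + 1 = B
  have hCC : C * Cᵀ + 1 = B := by
    ext i j
    rw [Matrix.add_apply, Matrix.mul_apply, hCw, hBv, Matrix.one_apply]
    simp only [transpose_apply, circ_apply]
    rw [CC_entry m i j]
    ring
  -- invertibility of B
  have hdet : IsUnit B.det := by
    have h1 : (C * Cᵀ).PosSemidef := by
      have := Matrix.posSemidef_self_mul_conjTranspose C
      rwa [Matrix.conjTranspose_eq_transpose_of_trivial] at this
    have h2 : (C * Cᵀ + 1).PosDef := Matrix.PosDef.posSemidef_add h1 Matrix.PosDef.one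
    rw [hCC] at h2
    exact h2.det_pos.ne'.isUnit
  have hBB : B * B⁻¹ = 1 := Matrix.mul_nonsing_inv _ hdet
  have hBiB : B⁻¹ * B = 1 := Matrix.nonsing_inv_mul _ hdet
  -- interaction with the all ones matrix
  have hBJ : B * Jmat (m+3) = Jmat (m+3) := by
    ext i j
    rw [Matrix.mul_apply]
    simp only [Jmat, Matrix.of_apply, mul_one]
    exact hBrow i
  have hJB : Jmat (m+3) * B = Jmat (m+3) := by
    ext i j
    rw [Matrix.mul_apply]
    simp only [Jmat, Matrix.of_apply, one_mul]
    exact hBcol j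
  have hBiJ : B⁻¹ * Jmat (m+3) = Jmat (m+3) := by
    calc B⁻¹ * Jmat (m+3) = B⁻¹ * (B * Jmat (m+3)) := by rw [hBJ]
      _ = (B⁻¹ * B) * Jmat (m+3) := by rw [mul_assoc]
      _ = Jmat (m+3) := by rw [hBiB, one_mul]
  have hJBi : Jmat (m+3) * B⁻¹ = Jmat (m+3) := by
    calc Jmat (m+3) * B⁻¹ = (Jmat (m+3) * B) * B⁻¹ := by rw [hJB]
      _ = Jmat (m+3) := by rw [mul_assoc, hBB, mul_one]
  have hBisym : B⁻¹ᵀ = B⁻¹ := by rw [Matrix.transpose_nonsing_inv, hBsym]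
  have hJsym : (Jmat (m+3))ᵀ = Jmat (m+3) := rfl
  have hJJ : Jmat (m+3) * Jmat (m+3) = ((m+3 : ℕ) : ℝ) • Jmat (m+3) := by
    ext i j
    rw [Matrix.mul_apply, Matrix.smul_apply]
    simp [Jmat, Finset.sum_const, Finset.card_univ]
  -- X in closed form
  have hXJ : X = Jmat (m+3) - N • B⁻¹ := by
    rw [hX, hCC, mul_sub, hBiJ, Matrix.mul_smul, mul_one]
  -- the bottom-right block of n² H
  have hM : -(Jmat (m+3)) - N • X = N^2 • B⁻¹ - (N+1) • Jmat (m+3) := by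
    rw [hXJ]
    module
  have hBM : B * (-(Jmat (m+3)) - N • X)
      = N^2 • (1 : Matrix (Fin (m+3)) (Fin (m+3)) ℝ) - (N+1) • Jmat (m+3) := by
    rw [hM, mul_sub, Matrix.mul_smul, Matrix.mul_smul, hBB, hBJ]
  have hcoef : N^2 - (N+1) * ((m+3 : ℕ) : ℝ) = 1 := by
    rw [hN]; push_cast; ring
  have hJM : Jmat (m+3) * (-(Jmat (m+3)) - N • X) = Jmat (m+3) := by
    rw [hM, mul_sub, Matrix.mul_smul, Matrix.mul_smul, hJBi, hJJ, smul_smul, ← sub_smul, hcoef,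
      one_smul]
  have hMJ : (-(Jmat (m+3)) - N • X) * Jmat (m+3) = Jmat (m+3) := by
    rw [hM, sub_mul, Matrix.smul_mul, Matrix.smul_mul, hBiJ, hJJ, smul_smul, ← sub_smul, hcoef,
      one_smul]
  have hMsym : (-(Jmat (m+3)) - N • X)ᵀ = -(Jmat (m+3)) - N • X := by
    rw [hM, Matrix.transpose_sub, Matrix.transpose_smul, Matrix.transpose_smul, hBisym, hJsym,
      ← hM]
  -- entrywise consequences
  have hMcol : ∀ j : Fin (m+3), ∑ k, (-(Jmat (m+3)) - N • X) k j = 1 := by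
    intro j
    have h := congrFun (congrFun hJM 0) j
    rw [Matrix.mul_apply] at h
    simpa [Jmat] using h
  have hMrow : ∀ i : Fin (m+3), ∑ k, (-(Jmat (m+3)) - N • X) i k = 1 := by
    intro i
    have h := congrFun (congrFun hMJ i) 0
    rw [Matrix.mul_apply] at h
    simpa [Jmat] using h
  have hBMe : ∀ i j : Fin (m+3), ∑ k, B i k * (-(Jmat (m+3)) - N • X) k j
      = N^2 * (if i = j then 1 else 0) - (N+1) := by
    intro i j
    have h := congrFun (congrFun hBM i) j
    rw [Matrix.mul_apply] at h
    simpa [Matrix.sub_apply, Matrix.smul_apply, Matrix.one_apply, Jmat] using h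
  -- the all-ones matrix on the big index type
  set E : Matrix (Fin 1 ⊕ Fin (m+3)) (Fin 1 ⊕ Fin (m+3)) ℝ := Matrix.of fun _ _ => 1 with hE
  have hEsym : Eᵀ = E := rfl
  have hcard : ((m+3 : ℕ) : ℝ) = N - 1 := by rw [hN]; push_cast; ring
  -- the key computation : L H = 1 - N⁻¹ E
  have key : L * H = 1 - N⁻¹ • E := by
    rw [hL, hH, Matrix.mul_smul]
    ext i j
    rw [Matrix.sub_apply, Matrix.one_apply, Matrix.smul_apply, Matrix.smul_apply,
      Matrix.mul_apply]
    obtain i | i := i <;> obtain j | j := j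
    · -- inl inl
      rw [Fintype.sum_sum_type]
      simp only [Matrix.fromBlocks_apply₁₁, Matrix.fromBlocks_apply₁₂, Matrix.fromBlocks_apply₂₁,
        Matrix.of_apply, hE, Fin.sum_univ_one, Finset.sum_const, Finset.card_univ,
        Fintype.card_fin, nsmul_eq_mul, mul_neg, neg_mul, neg_neg, mul_one]
      rw [if_pos (by simp [Subsingleton.elim i j]), hcard]
      simp only [smul_eq_mul]
      field_simp
      ring
    · -- inl inr
      rw [Fintype.sum_sum_type]
      simp only [Matrix.fromBlocks_apply₁₁, Matrix.fromBlocks_apply₁₂, Matrix.fromBlocks_apply₂₂,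
        Matrix.of_apply, hE, Fin.sum_univ_one, neg_mul, one_mul]
      rw [Finset.sum_neg_distrib, hMcol j, if_neg (by simp)]
      simp only [smul_eq_mul]
      field_simp
      ring
    · -- inr inl
      rw [Fintype.sum_sum_type]
      simp only [Matrix.fromBlocks_apply₂₁, Matrix.fromBlocks_apply₁₁, Matrix.fromBlocks_apply₂₂,
        Matrix.of_apply, hE, Fin.sum_univ_one, mul_neg, mul_one]
      rw [Finset.sum_neg_distrib, hBrow i, if_neg (by simp)]
      simp only [smul_eq_mul]
      field_simp
      ring
    · -- inr inr
      rw [Fintype.sum_sum_type]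
      simp only [Matrix.fromBlocks_apply₂₁, Matrix.fromBlocks_apply₁₂, Matrix.fromBlocks_apply₂₂,
        Matrix.of_apply, hE, Fin.sum_univ_one, neg_mul, neg_neg, one_mul]
      rw [hBMe i j]
      by_cases h : i = j
      · subst h
        rw [if_pos rfl, if_pos rfl]
        simp only [smul_eq_mul]
        field_simp
        ring
      · rw [if_neg h, if_neg (show ¬(Sum.inr i = (Sum.inr j : Fin 1 ⊕ Fin (m+3))) from
          by simpa using h)]
        simp only [smul_eq_mul]
        field_simp
        ring
  -- E annihilates L on the left and H on the right
  have hEL : E * L = 0 := by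
    rw [hL]
    ext i j
    rw [Matrix.mul_apply, Matrix.zero_apply]
    obtain j | j := j
    · rw [Fintype.sum_sum_type]
      simp only [Matrix.fromBlocks_apply₁₁, Matrix.fromBlocks_apply₂₁, Matrix.of_apply, hE,
        Fin.sum_univ_one, one_mul, Finset.sum_const, Finset.card_univ, Fintype.card_fin,
        nsmul_eq_mul, mul_neg, mul_one]
      rw [hcard]
      ring
    · rw [Fintype.sum_sum_type]
      simp only [Matrix.fromBlocks_apply₁₂, Matrix.fromBlocks_apply₂₂, Matrix.of_apply, hE,
        Fin.sum_univ_one, one_mul]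
      rw [hBcol j]
      ring
  have hHE : H * E = 0 := by
    rw [hH, Matrix.smul_mul]
    have h0 : (Matrix.fromBlocks (Matrix.of fun _ _ => N - 1)
        (Matrix.of fun _ _ => (-1 : ℝ)) (Matrix.of fun _ _ => -1)
        (-(Jmat (m+3)) - N • X)) * E = 0 := by
      ext i j
      rw [Matrix.mul_apply, Matrix.zero_apply]
      obtain i | i := i
      · rw [Fintype.sum_sum_type]
        simp only [Matrix.fromBlocks_apply₁₁, Matrix.fromBlocks_apply₁₂, Matrix.of_apply, hE,
          Fin.sum_univ_one, mul_one, Finset.sum_const, Finset.card_univ, Fintype.card_fin,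
          nsmul_eq_mul, mul_neg]
        rw [hcard]
        ring
      · rw [Fintype.sum_sum_type]
        simp only [Matrix.fromBlocks_apply₂₁, Matrix.fromBlocks_apply₂₂, Matrix.of_apply, hE,
          Fin.sum_univ_one, mul_one]
        rw [hMrow i]
        ring
    rw [h0, smul_zero]
  -- symmetry of L and H
  have hLsym : Lᵀ = L := by
    rw [hL, Matrix.fromBlocks_transpose, hBsym]
    rfl
  have hHsym : Hᵀ = H := by
    rw [hH, Matrix.transpose_smul, Matrix.fromBlocks_transpose, hMsym]
    rfl
  have hHL : H * L = 1 - N⁻¹ • E := by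
    rw [← hLsym, ← hHsym, ← Matrix.transpose_mul, key, Matrix.transpose_sub,
      Matrix.transpose_one, Matrix.transpose_smul, hEsym]
  refine ⟨?_, ?_, ?_, ?_⟩
  · rw [key, sub_mul, one_mul, Matrix.smul_mul, hEL, smul_zero, sub_zero]
  · rw [mul_assoc, key, mul_sub, mul_one, Matrix.mul_smul, hHE, smul_zero, sub_zero]
  · rw [key, Matrix.transpose_sub, Matrix.transpose_one, Matrix.transpose_smul, hEsym]
  · rw [hHL, Matrix.transpose_sub, Matrix.transpose_one, Matrix.transpose_smul, hEsym]

end Aux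

theorem wheel_laplacian_moore_penrose (n : ℕ) (hn : 4 ≤ n)
    (B C X : Matrix (Fin (n-1)) (Fin (n-1)) ℝ)
    (hB : B = circ (fun k => if k.val = 0 then (3:ℝ) else
      if k.val = 1 ∨ k.val = n - 2 then -1 else 0))
    (hC : C = circ (fun k => if k.val = 0 then (1:ℝ) else if k.val = n - 2 then -1 else 0))
    (hX : X = (C * Cᵀ + 1)⁻¹ * (Jmat (n-1) - (n:ℝ) • (1 : Matrix (Fin (n-1)) (Fin (n-1)) ℝ)))
    (L : Matrix (Fin 1 ⊕ Fin (n-1)) (Fin 1 ⊕ Fin (n-1)) ℝ)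
    (hL : L = Matrix.fromBlocks (Matrix.of fun _ _ => (n:ℝ) - 1) (Matrix.of fun _ _ => -1)
      (Matrix.of fun _ _ => -1) B)
    (H : Matrix (Fin 1 ⊕ Fin (n-1)) (Fin 1 ⊕ Fin (n-1)) ℝ)
    (hH : H = (1 / (n:ℝ)^2) •
      Matrix.fromBlocks (Matrix.of fun _ _ => (n:ℝ) - 1) (Matrix.of fun _ _ => -1)
        (Matrix.of fun _ _ => -1) (-(Jmat (n-1)) - (n:ℝ) • X)) :
    L * H * L = L ∧ H * L * H = H ∧ (L * H)ᵀ = L * H ∧ (H * L)ᵀ = H * L := by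
  obtain ⟨m, rfl⟩ : ∃ m, n = m + 4 := ⟨n - 4, by omega⟩
  exact main_aux m B C X hB hC hX L hL H hH
end
end
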